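/- arXiv:1501.01836 — 2 statements merged into one kernel-verified Lean document; each statement's English description precedes it below -/
import Mathlib

section
/- Let g₁ and g₂ be inner products on V, let a and b be positive real numbers, and let φ be an alternating m-form on V. Writing C = comass (a • g₁ + b • g₂) φ, C₁ = comass g₁ φ and C₂ = comass g₂ φ, one has C² * (a^m * C₂² + b^m * C₁²) ≤ C₁² * C₂² (equivalently, 1/C² ≥ a^m/C₁² + b^m/C₂² whenever C, C₁, C₂ are positive). -/
open Matrix

/-- The Gram matrix of an `m`-tuple of vectors with respect to a bilinear form `g`. -/
noncomputable def gramMat {V : Type*} [AddCommGroup V] [Module ℝ V] (m : ℕ)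
    (g : LinearMap.BilinForm ℝ V) (v : Fin m → V) : Matrix (Fin m) (Fin m) ℝ :=
  Matrix.of fun i j => g (v i) (v j)

/-- The comass of an alternating `m`-form `φ` with respect to a bilinear form `g`. -/
noncomputable def comass {V : Type*} [AddCommGroup V] [Module ℝ V] (m : ℕ)
    (g : LinearMap.BilinForm ℝ V) (φ : V [⋀^Fin m]→ₗ[ℝ] ℝ) : ℝ :=
  sSup {x : ℝ | ∃ v : Fin m → V, (gramMat m g v).det ≠ 0 ∧
    x = φ v / Real.sqrt (gramMat m g v).det}

section Aux

set_option maxHeartbeats 1000000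

variable {V : Type*} [AddCommGroup V] [Module ℝ V]

open scoped MatrixOrder in
/-- Superadditivity of the determinant on positive (semi)definite matrices. -/
private lemma det_superadd {m : ℕ} (hm : 1 ≤ m) {A B : Matrix (Fin m) (Fin m) ℝ}
    (hA : A.PosDef) (hB : B.PosSemidef) : A.det + B.det ≤ (A + B).det := by
  classical
  set S := CFC.sqrt A with hSdef
  have hSps : S.PosSemidef := (CFC.sqrt_nonneg A).posSemidef
  have hSh : S.IsHermitian := hSps.1
  have hSS : S * S = A := CFC.sqrt_mul_sqrt_self A hA.posSemidef.nonneg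
  have hdetS : S.det * S.det = A.det := by rw [← det_mul, hSS]
  have hAd : 0 < A.det := hA.det_pos
  have hSdet : IsUnit S.det := by
    refine isUnit_iff_ne_zero.2 ?_
    intro h
    rw [h, mul_zero] at hdetS
    exact hAd.ne' hdetS.symm
  have h1 : S * S⁻¹ = 1 := mul_nonsing_inv _ hSdet
  have h2 : S⁻¹ * S = 1 := nonsing_inv_mul _ hSdet
  have hinvh : S⁻¹.IsHermitian := hSh.inv
  set C := S⁻¹ * B * S⁻¹ with hCdef
  have hC : C.PosSemidef := by
    have h := hB.conjTranspose_mul_mul_same S⁻¹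
    rwa [hinvh.eq] at h
  have hBC : S * C * S = B := by
    rw [hCdef]
    calc S * (S⁻¹ * B * S⁻¹) * S = (S * S⁻¹) * B * (S⁻¹ * S) := by
          simp only [Matrix.mul_assoc]
      _ = B := by rw [h1, h2, one_mul, mul_one]
  have hdec : A + B = S * (1 + C) * S := by
    rw [mul_add, add_mul, mul_one, hSS, hBC]
  have hdetB : B.det = A.det * C.det := by
    rw [← hBC, det_mul, det_mul]
    rw [← hdetS]; ring
  have hCh : C.IsHermitian := hC.1
  have hU : ((hCh.eigenvectorUnitary : Matrix (Fin m) (Fin m) ℝ)) *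
      star (hCh.eigenvectorUnitary : Matrix (Fin m) (Fin m) ℝ) = 1 :=
    (Matrix.mem_unitaryGroup_iff).mp (hCh.eigenvectorUnitary).2
  have hdetU : ((hCh.eigenvectorUnitary : Matrix (Fin m) (Fin m) ℝ)).det *
      ((star (hCh.eigenvectorUnitary : Matrix (Fin m) (Fin m) ℝ))).det = 1 := by
    rw [← det_mul, hU, det_one]
  have hs := hCh.spectral_theorem
  have hdd : (diagonal (fun i => 1 + hCh.eigenvalues i) : Matrix (Fin m) (Fin m) ℝ)
      = 1 + diagonal (RCLike.ofReal ∘ hCh.eigenvalues) := by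
    rw [← diagonal_one, diagonal_add]
    rfl
  have h1C : 1 + C = (hCh.eigenvectorUnitary : Matrix (Fin m) (Fin m) ℝ) *
      diagonal (fun i => 1 + hCh.eigenvalues i) *
      star (hCh.eigenvectorUnitary : Matrix (Fin m) (Fin m) ℝ) := by
    rw [hdd, mul_add, add_mul, mul_one, hU]
    exact congrArg (fun X => 1 + X) hs
  have hdet1C : (1 + C).det = ∏ i, (1 + hCh.eigenvalues i) := by
    rw [h1C, det_mul, det_mul, mul_comm, ← mul_assoc, mul_comm (det (star _)), hdetU,
      one_mul, det_diagonal]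
  have hdetC : C.det = ∏ i, hCh.eigenvalues i := by
    rw [hCh.det_eq_prod_eigenvalues]
    norm_num
  have hprod : 1 + C.det ≤ (1 + C).det := by
    rw [hdet1C, hdetC]
    have h10 : (1:ℝ) = ∏ _i : Fin m, (1:ℝ) := by simp
    nth_rewrite 1 [h10]
    refine Finset.prod_add_prod_le (i := ⟨0, hm⟩) (Finset.mem_univ _) (by simp)
      (fun j _ _ => ?_) (fun j _ _ => ?_) (fun i _ => by norm_num)
      (fun i _ => hC.eigenvalues_nonneg i)
    · have := hC.eigenvalues_nonneg j; linarith
    · have := hC.eigenvalues_nonneg j; linarith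
  calc A.det + B.det = A.det * (1 + C.det) := by rw [hdetB]; ring
    _ ≤ A.det * (1 + C).det := mul_le_mul_of_nonneg_left hprod hAd.le
    _ = (A + B).det := by rw [hdec, det_mul, det_mul, ← hdetS]; ring

/-- The inner-product-space core structure attached to an inner product `g`. -/
private noncomputable def ipCore (g : LinearMap.BilinForm ℝ V) (hsymm : g.IsSymm)
    (hpos : ∀ v : V, v ≠ 0 → 0 < g v v) : InnerProductSpace.Core ℝ V where
  inner x y := g x y
  conj_inner_symm x y := by simpa using hsymm.eq y x
  re_inner_nonneg x := by
    by_cases hx : x = 0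
    · simp [hx]
    · exact le_of_lt (hpos x hx)
  add_left x y z := by simp
  smul_left x y r := by simp
  definite x hx := by
    by_contra h
    exact absurd hx (hpos x h).ne'

private lemma indep_of_det_ne {m : ℕ} (g : LinearMap.BilinForm ℝ V) {v : Fin m → V}
    (h : (gramMat m g v).det ≠ 0) : LinearIndependent ℝ v := by
  classical
  by_contra hind
  obtain ⟨c, hc0, i, hci⟩ := Fintype.not_linearIndependent_iff.mp hind
  apply h
  rw [← Matrix.exists_mulVec_eq_zero_iff]
  refine ⟨c, fun h' => hci (congrFun h' i), funext fun k => ?_⟩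
  have : (gramMat m g v *ᵥ c) k = g (v k) (∑ j, c j • v j) := by
    simp [gramMat, mulVec, dotProduct, map_sum, _root_.map_smul, smul_eq_mul, mul_comm]
  rw [Pi.zero_apply, this, hc0, map_zero]

private lemma gram_posDef {m : ℕ} (g : LinearMap.BilinForm ℝ V) (hsymm : g.IsSymm)
    (hpos : ∀ v : V, v ≠ 0 → 0 < g v v) {v : Fin m → V}
    (hv : LinearIndependent ℝ v) : (gramMat m g v).PosDef := by
  classical
  refine Matrix.PosDef.of_dotProduct_mulVec_pos ?_ ?_
  · ext i j
    simpa [gramMat, conjTranspose_apply] using (hsymm.eq (v j) (v i))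
  · intro x hx
    have hw : (∑ i, x i • v i) ≠ 0 := by
      intro h0
      exact hx (funext fun i => Fintype.linearIndependent_iff.mp hv x h0 i)
    have hgg := hpos _ hw
    have hcalc : star x ⬝ᵥ (gramMat m g v *ᵥ x) = g (∑ i, x i • v i) (∑ j, x j • v j) := by
      simp only [map_sum, _root_.map_smul, LinearMap.sum_apply, LinearMap.smul_apply,
        smul_eq_mul, dotProduct, mulVec, gramMat, of_apply, Pi.star_apply, star_trivial,
        Finset.mul_sum]
      refine Finset.sum_congr rfl fun i _ => Finset.sum_congr rfl fun j _ => ?_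
      have hsym' : (g (v i)) (v j) = (g (v j)) (v i) := by simpa using hsymm.eq (v i) (v j)
      rw [hsym']; ring
    exact hcalc ▸ hgg

private lemma exists_bound [FiniteDimensional ℝ V] (m : ℕ)
    (g : LinearMap.BilinForm ℝ V) (hsymm : g.IsSymm) (hpos : ∀ v : V, v ≠ 0 → 0 < g v v)
    (φ : V [⋀^Fin m]→ₗ[ℝ] ℝ) :
    ∃ B : ℝ, 0 ≤ B ∧ ∀ v : Fin m → V, (gramMat m g v).det ≠ 0 →
      |φ v| ≤ B * Real.sqrt (gramMat m g v).det := by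
  classical
  letI := (ipCore g hsymm hpos).toNormedAddCommGroup
  letI := InnerProductSpace.ofCore (ipCore g hsymm hpos).toCore
  set n := Module.finrank ℝ V with hn
  set bV := stdOrthonormalBasis ℝ V with hbV
  refine ⟨∑ d : Fin m → Fin n, |φ (fun i => bV (d i))|,
    Finset.sum_nonneg fun _ _ => abs_nonneg _, ?_⟩
  intro v hv
  have hind : LinearIndependent ℝ v := indep_of_det_ne g hv
  set W := Submodule.span ℝ (Set.range v) with hW
  have hrank : Module.finrank ℝ W = m := by
    simpa using finrank_span_eq_card hind
  set o : OrthonormalBasis (Fin m) ℝ W :=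
    (stdOrthonormalBasis ℝ W).reindex (finCongr hrank) with ho
  set e : Fin m → V := fun i => (o i : V) with he
  have he_on : Orthonormal ℝ e := by
    have := o.orthonormal.comp_linearIsometry (W.subtypeₗᵢ)
    exact this
  have hmem : ∀ j, v j ∈ W := fun j => Submodule.subset_span ⟨j, rfl⟩
  set vW : Fin m → W := fun j => ⟨v j, hmem j⟩ with hvW
  set A : Matrix (Fin m) (Fin m) ℝ := Matrix.of (fun i j => o.repr (vW j) i) with hA
  have hvj : ∀ j, v j = ∑ i, A i j • e i := by
    intro j
    have h1 := o.sum_repr (vW j)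
    have h2 : ((∑ i, o.repr (vW j) i • o i : W) : V) = ∑ i, A i j • e i := by
      push_cast
      rfl
    rw [← h2, h1]
  have hgram : gramMat m g v = Aᵀ * A := by
    ext i j
    have hid : g (v i) (v j) = (inner ℝ (v i) (v j) : ℝ) := rfl
    show g (v i) (v j) = (Aᵀ * A) i j
    rw [hid]
    nth_rewrite 1 [hvj i]
    nth_rewrite 1 [hvj j]
    rw [he_on.inner_sum (fun k => A k i) (fun k => A k j) Finset.univ]
    simp [Matrix.mul_apply, transpose_apply]
  have hdet2 : (gramMat m g v).det = A.det ^ 2 := by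
    rw [hgram, det_mul, det_transpose, sq]
  have hsqrt : Real.sqrt (gramMat m g v).det = |A.det| := by
    rw [hdet2, Real.sqrt_sq_eq_abs]
  -- φ v = φ e * det A
  set ψ : W [⋀^Fin m]→ₗ[ℝ] ℝ := φ.compLinearMap W.subtype with hψ
  have hψv : ψ vW = φ v := by
    show φ (fun i => ((vW i : W) : V)) = φ v
    congr 1
  have hψe : ψ (⇑o.toBasis) = φ e := by
    show φ (fun i => ((o.toBasis i : W) : V)) = φ e
    congr 1
  have htm : o.toBasis.toMatrix vW = A := by
    ext i j
    rw [Module.Basis.toMatrix_apply, OrthonormalBasis.coe_toBasis_repr_apply]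
    rfl
  have hphiv : φ v = φ e * A.det := by
    rw [← hψv]
    nth_rewrite 1 [AlternatingMap.eq_smul_basis_det o.toBasis ψ]
    rw [AlternatingMap.smul_apply, Module.Basis.det_apply, htm, hψe]
    simp [smul_eq_mul]
  -- bound |φ e|
  have hebd : |φ e| ≤ ∑ d : Fin m → Fin n, |φ (fun i => bV (d i))| := by
    have hrep : ∀ i, e i = ∑ j, (inner ℝ (bV j) (e i) : ℝ) • bV j := by
      intro i
      conv_lhs => rw [← bV.sum_repr (e i)]
      refine Finset.sum_congr rfl fun j _ => ?_
      rw [bV.repr_apply_apply]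
    have hexp : φ e = ∑ d : Fin m → Fin n,
        (∏ i, (inner ℝ (bV (d i)) (e i) : ℝ)) • φ (fun i => bV (d i)) := by
      have h1 : φ e = φ (fun i => ∑ j, (inner ℝ (bV j) (e i) : ℝ) • bV j) := by
        congr 1
        funext i
        exact hrep i
      rw [h1]
      have h2 := φ.toMultilinearMap.map_sum (fun i j => (inner ℝ (bV j) (e i) : ℝ) • bV j)
      rw [show (φ (fun i => ∑ j, (inner ℝ (bV j) (e i) : ℝ) • bV j)) =
        (φ.toMultilinearMap (fun i => ∑ j, (inner ℝ (bV j) (e i) : ℝ) • bV j)) from rfl, h2]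
      refine Finset.sum_congr rfl fun d _ => ?_
      exact φ.toMultilinearMap.map_smul_univ (fun i => (inner ℝ (bV (d i)) (e i) : ℝ))
        (fun i => bV (d i))
    rw [hexp]
    refine (Finset.abs_sum_le_sum_abs _ _).trans ?_
    refine Finset.sum_le_sum fun d _ => ?_
    rw [smul_eq_mul, abs_mul]
    have hc1 : |∏ i, (inner ℝ (bV (d i)) (e i) : ℝ)| ≤ 1 := by
      rw [Finset.abs_prod]
      refine Finset.prod_le_one (fun i _ => abs_nonneg _) fun i _ => ?_
      have := abs_real_inner_le_norm (bV (d i)) (e i)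
      have h1 : ‖bV (d i)‖ = 1 := bV.orthonormal.1 _
      have h2 : ‖e i‖ = 1 := he_on.1 i
      rw [h1, h2, one_mul] at this
      exact this
    calc |∏ i, (inner ℝ (bV (d i)) (e i) : ℝ)| * |φ fun i => bV (d i)|
        ≤ 1 * |φ fun i => bV (d i)| :=
          mul_le_mul_of_nonneg_right hc1 (abs_nonneg _)
      _ = |φ fun i => bV (d i)| := one_mul _
  rw [hphiv, hsqrt, abs_mul]
  exact mul_le_mul_of_nonneg_right hebd (abs_nonneg _)


private def cset (m : ℕ) (g : LinearMap.BilinForm ℝ V) (φ : V [⋀^Fin m]→ₗ[ℝ] ℝ) : Set ℝ :=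
  {x : ℝ | ∃ v : Fin m → V, (gramMat m g v).det ≠ 0 ∧
    x = φ v / Real.sqrt (gramMat m g v).det}

private lemma comass_eq_csSup (m : ℕ) (g : LinearMap.BilinForm ℝ V) (φ : V [⋀^Fin m]→ₗ[ℝ] ℝ) :
    comass m g φ = sSup (cset m g φ) := rfl

private lemma neg_mem_cset {m : ℕ} (hm : 1 ≤ m) (g : LinearMap.BilinForm ℝ V)
    (φ : V [⋀^Fin m]→ₗ[ℝ] ℝ) {x : ℝ} (hx : x ∈ cset m g φ) : -x ∈ cset m g φ := by
  classical
  obtain ⟨v, hvdet, rfl⟩ := hx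
  set i0 : Fin m := ⟨0, hm⟩
  set v' : Fin m → V := Function.update v i0 (-(v i0)) with hv'
  set ε : Fin m → ℝ := fun i => if i = i0 then -1 else 1 with hε
  have hgram' : gramMat m g v' = diagonal ε * gramMat m g v * diagonal ε := by
    ext i j
    rw [Matrix.mul_diagonal, Matrix.diagonal_mul]
    show g (v' i) (v' j) = _
    by_cases hi : i = i0 <;> by_cases hj : j = i0 <;>
      simp [hv', hε, hi, hj, Function.update_apply, map_neg, LinearMap.neg_apply, gramMat]
  have hprodε : (∏ i, ε i) * (∏ i, ε i) = 1 := by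
    rw [← Finset.prod_mul_distrib]
    rw [show (∏ i, ε i * ε i) = ∏ i : Fin m, (1:ℝ) from
      Finset.prod_congr rfl fun i _ => by by_cases h : i = i0 <;> simp [hε, h]]
    simp
  have hdet' : (gramMat m g v').det = (gramMat m g v).det := by
    rw [hgram', det_mul, det_mul, det_diagonal]
    linear_combination (gramMat m g v).det * hprodε
  have hφ' : φ v' = -(φ v) := by
    have h1 : φ v' = -(φ (Function.update v i0 (v i0))) := φ.map_update_neg v i0 (v i0)
    rwa [Function.update_eq_self] at h1
  exact ⟨v', by rw [hdet']; exact hvdet, by rw [hφ', hdet', neg_div]⟩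

private lemma exists_nonneg_mem_cset [FiniteDimensional ℝ V] {m : ℕ} (hm : 1 ≤ m)
    (hm' : m ≤ Module.finrank ℝ V) (g : LinearMap.BilinForm ℝ V) (hsymm : g.IsSymm)
    (hpos : ∀ v : V, v ≠ 0 → 0 < g v v) (φ : V [⋀^Fin m]→ₗ[ℝ] ℝ) :
    ∃ x ∈ cset m g φ, 0 ≤ x := by
  classical
  set b := Module.finBasis ℝ V
  set v : Fin m → V := fun j => b (Fin.castLE hm' j) with hv
  have hind : LinearIndependent ℝ v :=
    b.linearIndependent.comp _ (Fin.castLE_injective hm')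
  have hdet : (gramMat m g v).det ≠ 0 := (gram_posDef g hsymm hpos hind).det_pos.ne'
  have hmem : φ v / Real.sqrt (gramMat m g v).det ∈ cset m g φ := ⟨v, hdet, rfl⟩
  rcases le_total 0 (φ v / Real.sqrt (gramMat m g v).det) with h | h
  · exact ⟨_, hmem, h⟩
  · exact ⟨_, neg_mem_cset hm g φ hmem, by linarith⟩

private lemma bddAbove_cset [FiniteDimensional ℝ V] {m : ℕ}
    (g : LinearMap.BilinForm ℝ V) (hsymm : g.IsSymm)
    (hpos : ∀ v : V, v ≠ 0 → 0 < g v v) (φ : V [⋀^Fin m]→ₗ[ℝ] ℝ) :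
    BddAbove (cset m g φ) := by
  obtain ⟨B, hB0, hB⟩ := exists_bound m g hsymm hpos φ
  refine ⟨B, ?_⟩
  rintro x ⟨v, hvdet, rfl⟩
  have hind : LinearIndependent ℝ v := indep_of_det_ne g hvdet
  have hdpos : 0 < (gramMat m g v).det := (gram_posDef g hsymm hpos hind).det_pos
  have hs : 0 < Real.sqrt (gramMat m g v).det := Real.sqrt_pos.2 hdpos
  rw [div_le_iff₀ hs]
  exact (le_abs_self _).trans (hB v hvdet)

private lemma comass_nonneg [FiniteDimensional ℝ V] {m : ℕ} (hm : 1 ≤ m)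
    (hm' : m ≤ Module.finrank ℝ V) (g : LinearMap.BilinForm ℝ V) (hsymm : g.IsSymm)
    (hpos : ∀ v : V, v ≠ 0 → 0 < g v v) (φ : V [⋀^Fin m]→ₗ[ℝ] ℝ) :
    0 ≤ comass m g φ := by
  obtain ⟨x, hx, hx0⟩ := exists_nonneg_mem_cset hm hm' g hsymm hpos φ
  exact hx0.trans (le_csSup (bddAbove_cset g hsymm hpos φ) hx)

private lemma abs_le_comass [FiniteDimensional ℝ V] {m : ℕ} (hm : 1 ≤ m)
    (g : LinearMap.BilinForm ℝ V) (hsymm : g.IsSymm)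
    (hpos : ∀ v : V, v ≠ 0 → 0 < g v v) (φ : V [⋀^Fin m]→ₗ[ℝ] ℝ)
    {v : Fin m → V} (hvdet : (gramMat m g v).det ≠ 0) :
    |φ v| ≤ comass m g φ * Real.sqrt (gramMat m g v).det := by
  have hind : LinearIndependent ℝ v := indep_of_det_ne g hvdet
  have hdpos : 0 < (gramMat m g v).det := (gram_posDef g hsymm hpos hind).det_pos
  have hs : 0 < Real.sqrt (gramMat m g v).det := Real.sqrt_pos.2 hdpos
  have hbdd := bddAbove_cset g hsymm hpos φ
  have h1 : φ v / Real.sqrt (gramMat m g v).det ≤ comass m g φ :=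
    le_csSup hbdd ⟨v, hvdet, rfl⟩
  have h2 : -(φ v / Real.sqrt (gramMat m g v).det) ≤ comass m g φ :=
    le_csSup hbdd (neg_mem_cset hm g φ ⟨v, hvdet, rfl⟩)
  have habs : |φ v| / Real.sqrt (gramMat m g v).det ≤ comass m g φ := by
    rcases abs_cases (φ v) with ⟨h, _⟩ | ⟨h, _⟩
    · rw [h]; exact h1
    · rw [h, neg_div]; exact h2
  calc |φ v| = |φ v| / Real.sqrt (gramMat m g v).det * Real.sqrt (gramMat m g v).det := by
        field_simp
    _ ≤ comass m g φ * Real.sqrt (gramMat m g v).det :=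
        mul_le_mul_of_nonneg_right habs hs.le

end Aux

set_option maxHeartbeats 1000000 in
/-- Comass Control for Gluing Procedure. -/
theorem comass_glue_control {V : Type*} [AddCommGroup V] [Module ℝ V]
    [FiniteDimensional ℝ V] (m : ℕ) (hm : 1 ≤ m) (hm' : m ≤ Module.finrank ℝ V)
    (g₁ g₂ : LinearMap.BilinForm ℝ V)
    (hg₁symm : g₁.IsSymm) (hg₁pos : ∀ v : V, v ≠ 0 → 0 < g₁ v v)
    (hg₂symm : g₂.IsSymm) (hg₂pos : ∀ v : V, v ≠ 0 → 0 < g₂ v v)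
    (a b : ℝ) (ha : 0 < a) (hb : 0 < b)
    (φ : V [⋀^Fin m]→ₗ[ℝ] ℝ) :
    (comass m (a • g₁ + b • g₂) φ) ^ 2 *
      (a ^ m * (comass m g₂ φ) ^ 2 + b ^ m * (comass m g₁ φ) ^ 2) ≤
      (comass m g₁ φ) ^ 2 * (comass m g₂ φ) ^ 2 := by
  classical
  set g : LinearMap.BilinForm ℝ V := a • g₁ + b • g₂ with hgdef
  have hsmul_symm : ∀ (c : ℝ) (h : LinearMap.BilinForm ℝ V), h.IsSymm → (c • h).IsSymm := by
    intro c h hh; refine ⟨fun x y => ?_⟩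
    have h1 : h x y = h y x := by simpa using hh.eq x y
    simp [LinearMap.smul_apply, h1]
  have hsmul_pos : ∀ (c : ℝ), 0 < c → ∀ (h : LinearMap.BilinForm ℝ V),
      (∀ v : V, v ≠ 0 → 0 < h v v) → ∀ v : V, v ≠ 0 → 0 < (c • h) v v := by
    intro c hc h hh v hv
    simpa [LinearMap.smul_apply] using mul_pos hc (hh v hv)
  have hgsymm : g.IsSymm := by
    refine ⟨fun x y => ?_⟩
    have h1 : g₁ x y = g₁ y x := by simpa using hg₁symm.eq x y
    have h2 : g₂ x y = g₂ y x := by simpa using hg₂symm.eq x y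
    simp [hgdef, LinearMap.add_apply, LinearMap.smul_apply, h1, h2]
  have hgpos : ∀ v : V, v ≠ 0 → 0 < g v v := by
    intro v hv
    have := add_pos (mul_pos ha (hg₁pos v hv)) (mul_pos hb (hg₂pos v hv))
    simpa [hgdef, LinearMap.add_apply, LinearMap.smul_apply] using this
  set C := comass m g φ with hC
  set C₁ := comass m g₁ φ with hC₁
  set C₂ := comass m g₂ φ with hC₂
  have hC₁0 : 0 ≤ C₁ := comass_nonneg hm hm' g₁ hg₁symm hg₁pos φ
  have hC₂0 : 0 ≤ C₂ := comass_nonneg hm hm' g₂ hg₂symm hg₂pos φ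
  have hC0 : 0 ≤ C := comass_nonneg hm hm' g hgsymm hgpos φ
  set K : ℝ := a ^ m * C₂ ^ 2 + b ^ m * C₁ ^ 2 with hK
  have hK0 : 0 ≤ K := by positivity
  rcases eq_or_lt_of_le hK0 with hK0' | hKpos
  · rw [← hK0', mul_zero]
    positivity
  · have hBnd : ∀ x ∈ cset m g φ, x ≤ Real.sqrt (C₁ ^ 2 * C₂ ^ 2 / K) := by
      rintro x ⟨v, hvdet, rfl⟩
      have hind : LinearIndependent ℝ v := indep_of_det_ne g hvdet
      have hpd₁ : (gramMat m g₁ v).PosDef := gram_posDef g₁ hg₁symm hg₁pos hind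
      have hpd₂ : (gramMat m g₂ v).PosDef := gram_posDef g₂ hg₂symm hg₂pos hind
      have hd₁ : 0 < (gramMat m g₁ v).det := hpd₁.det_pos
      have hd₂ : 0 < (gramMat m g₂ v).det := hpd₂.det_pos
      have hdG : 0 < (gramMat m g v).det := (gram_posDef g hgsymm hgpos hind).det_pos
      have hsplit : gramMat m g v = gramMat m (a • g₁) v + gramMat m (b • g₂) v := by
        ext i j
        simp [gramMat, hgdef, LinearMap.add_apply, LinearMap.smul_apply]
      have hsm₁ : gramMat m (a • g₁) v = a • gramMat m g₁ v := by
        ext i j; simp [gramMat, LinearMap.smul_apply]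
      have hsm₂ : gramMat m (b • g₂) v = b • gramMat m g₂ v := by
        ext i j; simp [gramMat, LinearMap.smul_apply]
      have hsuper : a ^ m * (gramMat m g₁ v).det + b ^ m * (gramMat m g₂ v).det
          ≤ (gramMat m g v).det := by
        have hpda : (gramMat m (a • g₁) v).PosDef :=
          gram_posDef (a • g₁) (hsmul_symm a g₁ hg₁symm) (hsmul_pos a ha g₁ hg₁pos) hind
        have hpdb : (gramMat m (b • g₂) v).PosDef :=
          gram_posDef (b • g₂) (hsmul_symm b g₂ hg₂symm) (hsmul_pos b hb g₂ hg₂pos) hind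
        have h := det_superadd hm hpda hpdb.posSemidef
        rw [hsplit]
        rw [hsm₁, hsm₂, det_smul, det_smul, Fintype.card_fin] at h
        exact h
      have hb₁ : |φ v| ≤ C₁ * Real.sqrt (gramMat m g₁ v).det :=
        abs_le_comass hm g₁ hg₁symm hg₁pos φ hd₁.ne'
      have hb₂ : |φ v| ≤ C₂ * Real.sqrt (gramMat m g₂ v).det :=
        abs_le_comass hm g₂ hg₂symm hg₂pos φ hd₂.ne'
      have hsq₁ : (φ v) ^ 2 ≤ C₁ ^ 2 * (gramMat m g₁ v).det := by
        have h1 := mul_self_le_mul_self (abs_nonneg (φ v)) hb₁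
        rw [abs_mul_abs_self] at h1
        calc (φ v) ^ 2 = φ v * φ v := sq (φ v)
          _ ≤ C₁ * Real.sqrt (gramMat m g₁ v).det * (C₁ * Real.sqrt (gramMat m g₁ v).det) := h1
          _ = C₁ ^ 2 * (Real.sqrt (gramMat m g₁ v).det * Real.sqrt (gramMat m g₁ v).det) := by
              ring
          _ = C₁ ^ 2 * (gramMat m g₁ v).det := by
              rw [Real.mul_self_sqrt hd₁.le]
      have hsq₂ : (φ v) ^ 2 ≤ C₂ ^ 2 * (gramMat m g₂ v).det := by
        have h1 := mul_self_le_mul_self (abs_nonneg (φ v)) hb₂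
        rw [abs_mul_abs_self] at h1
        calc (φ v) ^ 2 = φ v * φ v := sq (φ v)
          _ ≤ C₂ * Real.sqrt (gramMat m g₂ v).det * (C₂ * Real.sqrt (gramMat m g₂ v).det) := h1
          _ = C₂ ^ 2 * (Real.sqrt (gramMat m g₂ v).det * Real.sqrt (gramMat m g₂ v).det) := by
              ring
          _ = C₂ ^ 2 * (gramMat m g₂ v).det := by
              rw [Real.mul_self_sqrt hd₂.le]
      have hkey : (φ v) ^ 2 * K ≤ C₁ ^ 2 * C₂ ^ 2 * (gramMat m g v).det := by
        have ham : (0:ℝ) ≤ a ^ m := by positivity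
        have hbm : (0:ℝ) ≤ b ^ m := by positivity
        calc (φ v) ^ 2 * K = a ^ m * C₂ ^ 2 * (φ v) ^ 2 + b ^ m * C₁ ^ 2 * (φ v) ^ 2 := by
              rw [hK]; ring
          _ ≤ a ^ m * C₂ ^ 2 * (C₁ ^ 2 * (gramMat m g₁ v).det)
              + b ^ m * C₁ ^ 2 * (C₂ ^ 2 * (gramMat m g₂ v).det) := by
              gcongr <;> positivity
          _ = C₁ ^ 2 * C₂ ^ 2 *
              (a ^ m * (gramMat m g₁ v).det + b ^ m * (gramMat m g₂ v).det) := by ring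
          _ ≤ C₁ ^ 2 * C₂ ^ 2 * (gramMat m g v).det := by
              have h0 : (0:ℝ) ≤ C₁ ^ 2 * C₂ ^ 2 := by positivity
              exact mul_le_mul_of_nonneg_left hsuper h0
      have hx2 : (φ v / Real.sqrt (gramMat m g v).det) ^ 2 ≤ C₁ ^ 2 * C₂ ^ 2 / K := by
        rw [div_pow, Real.sq_sqrt hdG.le, div_le_div_iff₀ hdG hKpos]
        linarith [hkey]
      calc φ v / Real.sqrt (gramMat m g v).det
          ≤ |φ v / Real.sqrt (gramMat m g v).det| := le_abs_self _
        _ = Real.sqrt ((φ v / Real.sqrt (gramMat m g v).det) ^ 2) :=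
            (Real.sqrt_sq_eq_abs _).symm
        _ ≤ Real.sqrt (C₁ ^ 2 * C₂ ^ 2 / K) := Real.sqrt_le_sqrt hx2
    have hCle : C ≤ Real.sqrt (C₁ ^ 2 * C₂ ^ 2 / K) :=
      Real.sSup_le hBnd (Real.sqrt_nonneg _)
    have hC2 : C ^ 2 ≤ C₁ ^ 2 * C₂ ^ 2 / K := by
      have h1 : C ^ 2 ≤ Real.sqrt (C₁ ^ 2 * C₂ ^ 2 / K) ^ 2 := by
        exact pow_le_pow_left₀ hC0 hCle 2
      rwa [Real.sq_sqrt (by positivity)] at h1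
    calc C ^ 2 * K ≤ C₁ ^ 2 * C₂ ^ 2 / K * K := mul_le_mul_of_nonneg_right hC2 hK0
      _ = C₁ ^ 2 * C₂ ^ 2 := div_mul_cancel₀ _ hKpos.ne'
end

section
/- Let E be a finite-dimensional real inner product space, M a real inner product space of finite dimension m ≥ 1, and π : E →ₗ[ℝ] M a surjective linear map with kernel F such that ⟪π x, π y⟫ = ⟪x, y⟫ for all x, y in the orthogonal complement Fᗮ. Let ω be an alternating m-form on M with ω b = 1 for some orthonormal basis b of M. Then comass (π*ω) = 1. -/
open Matrix

/-- The Gram matrix of an `m`-tuple of vectors in a real inner product space. -/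
noncomputable def gramIP {E : Type*} [NormedAddCommGroup E] [InnerProductSpace ℝ E]
    (m : ℕ) (v : Fin m → E) : Matrix (Fin m) (Fin m) ℝ :=
  Matrix.of fun i j => (inner ℝ (v i) (v j) : ℝ)

/-- The comass of an alternating `m`-form on a real inner product space. -/
noncomputable def comassIP {E : Type*} [NormedAddCommGroup E] [InnerProductSpace ℝ E]
    (m : ℕ) (φ : E [⋀^Fin m]→ₗ[ℝ] ℝ) : ℝ :=
  sSup {x : ℝ | ∃ v : Fin m → E, (gramIP m v).det ≠ 0 ∧
    x = φ v / Real.sqrt (gramIP m v).det}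


lemma psd_det_nonneg {n : Type*} [Fintype n] [DecidableEq n] {A : Matrix n n ℝ}
    (hA : A.PosSemidef) : 0 ≤ A.det := by
  rw [hA.1.det_eq_prod_eigenvalues]
  exact Finset.prod_nonneg fun i _ => by exact_mod_cast hA.eigenvalues_nonneg i

lemma psd_det_le_one {n : Type*} [Fintype n] [DecidableEq n] {D : Matrix n n ℝ}
    (hD : D.PosSemidef) (h1 : (1 - D).PosSemidef) : D.det ≤ 1 := by
  rw [hD.1.det_eq_prod_eigenvalues]
  refine Finset.prod_le_one (fun i _ => by exact_mod_cast hD.eigenvalues_nonneg i) ?_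
  intro i _
  set v : EuclideanSpace ℝ n := hD.1.eigenvectorBasis i with hvdef
  have hv := h1.dotProduct_mulVec_nonneg (⇑v)
  rw [sub_mulVec, one_mulVec, dotProduct_sub] at hv
  have h2 : dotProduct (star (v : n → ℝ)) (v : n → ℝ) = 1 := by
    have h : ‖v‖ = 1 := hD.1.eigenvectorBasis.orthonormal.1 i
    have h' : (inner ℝ v v : ℝ) = 1 := by
      rw [real_inner_self_eq_norm_sq, h]; norm_num
    rw [PiLp.inner_apply] at h'
    simpa [dotProduct, sq] using h'
  have h3 : hD.1.eigenvalues i = dotProduct (star (v : n → ℝ)) (D *ᵥ (v : n → ℝ)) := by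
    have := hD.1.eigenvalues_eq i
    simpa using this
  rw [h2, ← h3] at hv
  have : hD.1.eigenvalues i ≤ 1 := by linarith
  exact_mod_cast this

open scoped MatrixOrder in
lemma psd_det_le_det_add {n : Type*} [Fintype n] [DecidableEq n] {A B : Matrix n n ℝ}
    (hA : A.PosSemidef) (hB : B.PosSemidef) : A.det ≤ (A + B).det := by
  set C := A + B with hC
  have hCpsd : C.PosSemidef := hA.add hB
  by_cases hdet : C.det = 0
  · rw [hdet]
    obtain ⟨x, hx0, hx⟩ := Matrix.exists_mulVec_eq_zero_iff.2 hdet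
    have h1 : dotProduct (star x) (C *ᵥ x) = 0 := by rw [hx, dotProduct_zero]
    have h2 : dotProduct (star x) (A *ᵥ x) = 0 := by
      have hA' := hA.dotProduct_mulVec_nonneg x
      have hB' := hB.dotProduct_mulVec_nonneg x
      have hsum : dotProduct (star x) (A *ᵥ x) + dotProduct (star x) (B *ᵥ x) = 0 := by
        rw [← dotProduct_add, ← add_mulVec]; exact h1
      linarith
    have h3 : A *ᵥ x = 0 := (hA.dotProduct_mulVec_zero_iff x).1 h2
    exact le_of_eq (Matrix.exists_mulVec_eq_zero_iff.1 ⟨x, hx0, h3⟩)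
  · have hCdetpos : 0 < C.det := lt_of_le_of_ne (psd_det_nonneg hCpsd) (Ne.symm hdet)
    have hCunit : IsUnit C.det := isUnit_iff_ne_zero.2 hdet
    have hCpos : C.PosDef := by
      refine .of_dotProduct_mulVec_pos hCpsd.1 (fun x hx0 => ?_)
      rcases lt_or_eq_of_le (hCpsd.dotProduct_mulVec_nonneg x) with h | h
      · exact h
      · exact absurd (Matrix.exists_mulVec_eq_zero_iff.1
          ⟨x, hx0, (hCpsd.dotProduct_mulVec_zero_iff x).1 h.symm⟩) hdet
    have hCinv : C⁻¹.PosDef := hCpos.inv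
    set S := CFC.sqrt C⁻¹ with hS
    have hSS : S * S = C⁻¹ := CFC.sqrt_mul_sqrt_self C⁻¹ hCinv.posSemidef.nonneg
    have hSherm : Sᴴ = S := (CFC.sqrt_nonneg C⁻¹).posSemidef.1
    have hSdet : IsUnit S.det := by
      rw [isUnit_iff_ne_zero]
      intro h
      have h1 : (C⁻¹).det = 0 := by rw [← hSS, det_mul, h, mul_zero]
      rw [Matrix.det_nonsing_inv, Ring.inverse_eq_inv] at h1
      exact hdet (by
        have := inv_ne_zero (a := C.det) hdet
        exact absurd h1 this)
    have hCeq : C = S⁻¹ * S⁻¹ := by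
      rw [← Matrix.mul_inv_rev, hSS, Matrix.nonsing_inv_nonsing_inv _ hCunit]
    have hSCS : S * C * S = 1 := by
      rw [hCeq, ← mul_assoc, mul_assoc S S⁻¹, ← mul_assoc S S⁻¹,
        Matrix.mul_nonsing_inv _ hSdet, one_mul, Matrix.nonsing_inv_mul _ hSdet]
    have hD : (S * A * S).PosSemidef := by
      have := hA.mul_mul_conjTranspose_same S
      rwa [hSherm] at this
    have h1D : (1 - S * A * S).PosSemidef := by
      have h' : 1 - S * A * S = S * B * S := by
        rw [← hSCS, hC, mul_add, add_mul]; abel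
      rw [h']
      have := hB.mul_mul_conjTranspose_same S
      rwa [hSherm] at this
    have hdle := psd_det_le_one hD h1D
    have hdd : (S * A * S).det = A.det * (C.det)⁻¹ := by
      rw [det_mul, det_mul]
      have : S.det * S.det = (C.det)⁻¹ := by
        rw [← det_mul, hSS, Matrix.det_nonsing_inv, Ring.inverse_eq_inv]
      calc S.det * A.det * S.det = A.det * (S.det * S.det) := by ring
        _ = A.det * (C.det)⁻¹ := by rw [this]
    rw [hdd] at hdle
    calc A.det = A.det * (C.det)⁻¹ * C.det := by field_simp
      _ ≤ 1 * C.det := by exact mul_le_mul_of_nonneg_right hdle (le_of_lt hCdetpos)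
      _ = C.det := one_mul _

lemma gramIP_posSemidef {E : Type*} [NormedAddCommGroup E] [InnerProductSpace ℝ E]
    (m : ℕ) (v : Fin m → E) : (gramIP m v).PosSemidef := by
  refine Matrix.PosSemidef.of_dotProduct_mulVec_nonneg ?_ ?_
  · ext i j
    simp [Matrix.conjTranspose_apply, gramIP, real_inner_comm]
  · intro x
    have key : dotProduct (star x) ((gramIP m v) *ᵥ x)
        = (inner ℝ (∑ i, x i • v i) (∑ j, x j • v j) : ℝ) := by
      simp only [dotProduct, mulVec, gramIP, Matrix.of_apply, star_trivial,
        inner_sum, sum_inner, real_inner_smul_left, real_inner_smul_right, Finset.mul_sum]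
      congr 1; ext i; congr 1; ext j
      rw [real_inner_comm (v j) (v i)]; ring
    rw [key]
    exact real_inner_self_nonneg

lemma gramIP_eq {M : Type*} [NormedAddCommGroup M] [InnerProductSpace ℝ M]
    (m : ℕ) (b : OrthonormalBasis (Fin m) ℝ M) (w : Fin m → M) :
    gramIP m w = (b.toBasis.toMatrix w)ᵀ * (b.toBasis.toMatrix w) := by
  ext i j
  have h := b.sum_inner_mul_inner (w i) (w j)
  simp only [Matrix.mul_apply, Matrix.transpose_apply, Module.Basis.toMatrix_apply,
    OrthonormalBasis.coe_toBasis_repr_apply, OrthonormalBasis.repr_apply_apply,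
    RCLike.inner_apply, conj_trivial] at *
  rw [gramIP, Matrix.of_apply, ← h]
  congr 1; ext k; rw [real_inner_comm (w i) (b k)]

lemma sqrt_det_gramIP {M : Type*} [NormedAddCommGroup M] [InnerProductSpace ℝ M]
    [FiniteDimensional ℝ M]
    (m : ℕ) (hM : Module.finrank ℝ M = m) (b : OrthonormalBasis (Fin m) ℝ M)
    (ω : M [⋀^Fin m]→ₗ[ℝ] ℝ) (hω : ω ⇑b = 1) (w : Fin m → M) :
    Real.sqrt (gramIP m w).det = |ω w| := by
  have hdet : (gramIP m w).det = (b.toBasis.det w) ^ 2 := by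
    rw [gramIP_eq m b w, det_mul, det_transpose, Module.Basis.det_apply, sq]
  have hω' : ω w = b.toBasis.det w := by
    have h := ω.eq_smul_basis_det b.toBasis
    rw [h]
    simp [OrthonormalBasis.coe_toBasis, hω]
  rw [hdet, Real.sqrt_sq_eq_abs, hω']

theorem comass_pullback_eq_one {E M : Type*}
    [NormedAddCommGroup E] [InnerProductSpace ℝ E] [FiniteDimensional ℝ E]
    [NormedAddCommGroup M] [InnerProductSpace ℝ M] [FiniteDimensional ℝ M]
    (m : ℕ) (hm : 1 ≤ m) (hM : Module.finrank ℝ M = m)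
    (π : E →ₗ[ℝ] M) (hsurj : Function.Surjective π)
    (hiso : ∀ x ∈ (LinearMap.ker π)ᗮ, ∀ y ∈ (LinearMap.ker π)ᗮ,
      (inner ℝ (π x) (π y) : ℝ) = (inner ℝ x y : ℝ))
    (ω : M [⋀^Fin m]→ₗ[ℝ] ℝ)
    (b : OrthonormalBasis (Fin m) ℝ M) (hω : ω ⇑b = 1) :
    comassIP m (ω.compLinearMap π) = 1 := by
  set K := (LinearMap.ker π)ᗮ with hK
  set φ := ω.compLinearMap π with hφ
  set S := {x : ℝ | ∃ v : Fin m → E, (gramIP m v).det ≠ 0 ∧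
    x = φ v / Real.sqrt (gramIP m v).det} with hSdef
  -- the horizontal lift linear map
  set f : K →ₗ[ℝ] M := π.comp K.subtype with hf
  have hinj : Function.Injective f := by
    rw [← LinearMap.ker_eq_bot, Submodule.eq_bot_iff]
    intro x hx
    have h1 : (x : E) ∈ LinearMap.ker π := hx
    have h2 : (inner ℝ ((x : E)) ((x : E)) : ℝ) = 0 :=
      (Submodule.mem_orthogonal _ _).1 x.2 (x : E) h1
    exact Subtype.ext (inner_self_eq_zero.1 h2)
  have hsurj' : Function.Surjective f := by
    intro y
    obtain ⟨x, hx⟩ := hsurj y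
    obtain ⟨p, hp, q, hq, hpq⟩ :=
      Submodule.exists_add_mem_mem_orthogonal (K := LinearMap.ker π) x
    refine ⟨⟨q, hq⟩, ?_⟩
    have : π q = y := by
      have : π x = π p + π q := by rw [← map_add, hpq]
      rw [hx, LinearMap.mem_ker.1 hp, zero_add] at this
      exact this.symm
    simpa [hf] using this
  set e := LinearEquiv.ofBijective f ⟨hinj, hsurj'⟩ with he
  set v : Fin m → E := fun i => (e.symm (b i) : E) with hv
  have hvK : ∀ i, v i ∈ K := fun i => (e.symm (b i)).2
  have hπv : ∀ i, π (v i) = b i := fun i => e.apply_symm_apply (b i)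
  have hgram : gramIP m v = 1 := by
    ext i j
    have := hiso (v i) (hvK i) (v j) (hvK j)
    rw [gramIP, Matrix.of_apply, ← this, hπv, hπv,
      orthonormal_iff_ite.1 b.orthonormal i j, Matrix.one_apply]
  have hφv : φ v = 1 := by
    have : π ∘ v = ⇑b := funext hπv
    rw [hφ, AlternatingMap.compLinearMap_apply]
    show ω (⇑π ∘ v) = 1
    rw [this, hω]
  have hone : (1 : ℝ) ∈ S := by
    refine ⟨v, ?_, ?_⟩
    · rw [hgram, det_one]; exact one_ne_zero
    · rw [hφv, hgram, det_one, Real.sqrt_one, div_one]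
  have hub : ∀ x ∈ S, x ≤ 1 := by
    rintro x ⟨w, hdet, rfl⟩
    have hpsd := gramIP_posSemidef m w
    have hdpos : 0 < (gramIP m w).det :=
      lt_of_le_of_ne (psd_det_nonneg hpsd) (Ne.symm hdet)
    set p : Fin m → E := fun i => (K.orthogonalProjectionOnto (w i) : E) with hp
    set q : Fin m → E := fun i => w i - p i with hq
    have hpK : ∀ i, p i ∈ K := fun i => (K.orthogonalProjectionOnto (w i)).2
    have hqKo : ∀ i, q i ∈ Kᗮ := fun i => Submodule.sub_starProjection_mem_orthogonal (K := K) (w i)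
    have hqker : ∀ i, q i ∈ LinearMap.ker π := by
      intro i
      have := hqKo i
      rwa [hK, Submodule.orthogonal_orthogonal] at this
    have hsplit : gramIP m w = gramIP m p + gramIP m q := by
      ext i j
      have hw : ∀ k, w k = p k + q k := fun k => by simp [hq]
      rw [Matrix.add_apply]
      show (inner ℝ (w i) (w j) : ℝ) = inner ℝ (p i) (p j) + inner ℝ (q i) (q j)
      rw [hw i, hw j, inner_add_left, inner_add_right, inner_add_right,
        Submodule.inner_right_of_mem_orthogonal (hpK i) (hqKo j),
        Submodule.inner_left_of_mem_orthogonal (hpK j) (hqKo i)]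
      ring
    have hgramp : gramIP m (π ∘ w) = gramIP m p := by
      ext i j
      have hπw : ∀ k, π (w k) = π (p k) := by
        intro k
        have : π (w k - p k) = 0 := hqker k
        rw [map_sub, sub_eq_zero] at this
        exact this
      show (inner ℝ (π (w i)) (π (w j)) : ℝ) = inner ℝ (p i) (p j)
      rw [hπw i, hπw j]
      exact hiso (p i) (hpK i) (p j) (hpK j)
    have hdetle : (gramIP m (π ∘ w)).det ≤ (gramIP m w).det := by
      rw [hgramp, hsplit]
      exact psd_det_le_det_add (gramIP_posSemidef m p) (gramIP_posSemidef m q)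
    have habs : |ω (π ∘ w)| = Real.sqrt (gramIP m (π ∘ w)).det :=
      (sqrt_det_gramIP m hM b ω hω (π ∘ w)).symm
    rw [div_le_one (Real.sqrt_pos.2 hdpos)]
    calc φ w = ω (π ∘ w) := by rw [hφ, AlternatingMap.compLinearMap_apply]; rfl
      _ ≤ |ω (π ∘ w)| := le_abs_self _
      _ = Real.sqrt (gramIP m (π ∘ w)).det := habs
      _ ≤ Real.sqrt (gramIP m w).det := Real.sqrt_le_sqrt hdetle
  exact IsGreatest.csSup_eq ⟨hone, hub⟩
end
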